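/- In a finite exact potential game, any sequence of strict better-reply updates (where each update strictly increases the deviating player's utility) terminates in finitely many steps at a pure-strategy Nash equilibrium. -/
import Mathlib


/-- A strict better-reply step: player `m` unilaterally deviates and strictly
increases its own utility. -/
def BetterReplyStep {M : Type*} [DecidableEq M] {S : M → Type*}
    (U : ∀ m : M, (∀ n, S n) → ℝ) (s s' : ∀ n, S n) : Prop :=
  ∃ m : M, (∀ n, n ≠ m → s' n = s n) ∧ U m s' > U m s

/-- A pure-strategy Nash equilibrium: no player has a strictly improving
unilateral deviation. -/
def IsNashEq {M : Type*} [DecidableEq M] {S : M → Type*}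
    (U : ∀ m : M, (∀ n, S n) → ℝ) (s : ∀ n, S n) : Prop :=
  ∀ (m : M) (s' : ∀ n, S n), (∀ n, n ≠ m → s' n = s n) → U m s' ≤ U m s

/-- In a finite exact potential game, any sequence of strict better-reply updates
terminates in finitely many steps (there is no infinite strict better-reply
sequence), and any profile from which no strict better reply exists is a
pure-strategy Nash equilibrium. -/
theorem finite_epg_better_reply_terminates_at_NE
    {M : Type*} [Fintype M] [DecidableEq M]
    {S : M → Type*} [∀ m, Fintype (S m)]
    (U : ∀ m : M, (∀ n, S n) → ℝ) (φ : (∀ n, S n) → ℝ)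
    (hpot : ∀ (m : M) (s s' : ∀ n, S n), (∀ n, n ≠ m → s' n = s n) →
      U m s' - U m s = φ s' - φ s) :
    (¬ ∃ f : ℕ → (∀ n, S n), ∀ t, BetterReplyStep U (f t) (f (t + 1))) ∧
    (∀ s : ∀ n, S n, (¬ ∃ s', BetterReplyStep U s s') → IsNashEq U s) := by
  constructor
  · rintro ⟨f, hf⟩
    have hstep : ∀ t, φ (f t) < φ (f (t + 1)) := by
      intro t
      obtain ⟨m, hne, hlt⟩ := hf t
      have := hpot m (f t) (f (t + 1)) hne
      linarith
    have hmono : StrictMono (fun t => φ (f t)) := strictMono_nat_of_lt_succ hstep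
    have hinj : Function.Injective f := fun a b h => hmono.injective (by simp [h])
    exact not_injective_infinite_finite f hinj
  · intro s hno m s' hne
    by_contra h
    exact hno ⟨s', m, hne, lt_of_not_ge h⟩
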